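/- Assume the fundamental unit ε of F satisfies |σ(ε)| ≥ 1 + √2. Then for every s ∈ [0.8722, 1/0.8722] and each j ∈ {2,3}, the set 𝔅_j(s) has at most 30 elements. -/

import Mathlib

open NumberField nonZeroDivisors MeasureTheory

noncomputable section

/-- `‖ux‖² = 2u₁²|σ(x)|² + 2u₂²|σ'(x)|²` for `u = (u₁, u₂)`. -/
def normSq2 {F : Type*} [Field F] (σ σ' : F →+* ℂ) (u₁ u₂ : ℝ) (x : F) : ℝ :=
  2 * u₁ ^ 2 * ‖σ x‖ ^ 2 + 2 * u₂ ^ 2 * ‖σ' x‖ ^ 2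

/-- `N(x) = |σ(x)|²·|σ'(x)|²`, the absolute value of the norm of `x`. -/
def absN {F : Type*} [Field F] (σ σ' : F →+* ℂ) (x : F) : ℝ :=
  ‖σ x‖ ^ 2 * ‖σ' x‖ ^ 2

/-- `ε` is a fundamental unit: every unit is `ζ · εᵏ` with `ζ` a root of unity. -/
def IsFundamentalUnit {F : Type*} [Field F] [NumberField F] (ε : (𝓞 F)ˣ) : Prop :=
  ∀ u : (𝓞 F)ˣ, ∃ (ζ : (𝓞 F)ˣ) (k : ℤ), (∃ n : ℕ, 0 < n ∧ ζ ^ n = 1) ∧ u = ζ * ε ^ k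

/-- `𝔅_j(s) = {x ∈ O_F : N(x) = j and ‖ux‖² < 8}` with `u = (s, 1/s)`. -/
def frakB {F : Type*} [Field F] [NumberField F] (σ σ' : F →+* ℂ) (j : ℕ) (s : ℝ) : Set (𝓞 F) :=
  {x | absN σ σ' (x : F) = j ∧ normSq2 σ σ' s (1 / s) (x : F) < 8}

set_option synthInstance.maxHeartbeats 1000000
set_option maxHeartbeats 2000000

/-! ### Auxiliary number-theoretic lemmas -/

lemma aux_numcase : ∀ w, w < 121 → w ∣ 120 → Nat.totient w ≤ 4 →
    w ≤ 6 ∨ w = 8 ∨ w = 10 ∨ w = 12 := by decide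

lemma aux_dvd120 {w : ℕ} (hw : 0 < w) (h : Nat.totient w ≤ 4) : w ∣ 120 := by
  rw [Nat.dvd_iff_prime_pow_dvd_dvd]
  intro p k pp hpk
  rcases Nat.eq_zero_or_pos k with rfl | hk
  · simp
  have hφpk : Nat.totient (p ^ k) ∣ Nat.totient w := Nat.totient_dvd_of_dvd hpk
  have hφw : 0 < Nat.totient w := Nat.totient_pos.mpr hw
  have hle : Nat.totient (p ^ k) ≤ 4 := le_trans (Nat.le_of_dvd hφw hφpk) h
  rw [Nat.totient_prime_pow pp hk] at hle
  have hpos : 0 < p ^ (k - 1) := Nat.pow_pos pp.pos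
  have hp2 := pp.two_le
  have hp5 : p ≤ 5 := by
    have := Nat.le_mul_of_pos_left (p - 1) hpos
    omega
  interval_cases p
  · norm_num at hle
    have hk3 : k ≤ 3 := by
      by_contra hc
      have : (2:ℕ) ^ 3 ≤ 2 ^ (k-1) := Nat.pow_le_pow_right (by norm_num) (by omega)
      omega
    exact dvd_trans (pow_dvd_pow 2 hk3) (by norm_num)
  · norm_num at hle
    have hk1 : k ≤ 1 := by
      by_contra hc
      have : (3:ℕ) ^ 1 ≤ 3 ^ (k-1) := Nat.pow_le_pow_right (by norm_num) (by omega)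
      omega
    exact dvd_trans (pow_dvd_pow 3 hk1) (by norm_num)
  · exact absurd pp (by norm_num)
  · norm_num at hle
    have hk1 : k ≤ 1 := by
      by_contra hc
      have : (5:ℕ) ^ 1 ≤ 5 ^ (k-1) := Nat.pow_le_pow_right (by norm_num) (by omega)
      omega
    exact dvd_trans (pow_dvd_pow 5 hk1) (by norm_num)

lemma aux_zmod3_sq : ∀ t : ZMod 3, t ^ 2 ≠ -1 := by decide
lemma aux_zmod2_pow4 : ∀ t : ZMod 2, t ^ 4 = 1 → t = 1 := by decide
lemma aux_zmod2_pow5 : ∀ t : ZMod 2, t ^ 5 = 1 → t = 1 := by decide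
lemma aux_zmod3_pow5 : ∀ t : ZMod 3, t ^ 5 = 1 → t = 1 := by decide
lemma aux_zmod2_pow3 : ∀ t : ZMod 2, t ^ 3 = 1 → t = 1 := by decide

/-! ### Places and ideal norms -/

section Main

variable {F K : Type*} [Field F] [NumberField F] [Field K] [NumberField K]
  [Algebra K F] [IsScalarTower ℚ K F]

omit [NumberField F] [NumberField K] [IsScalarTower ℚ K F] in
lemma aux_noRealPlace (hKim : ∀ φ : K →+* ℂ, ∃ x, (φ x).im ≠ 0) :
    ∀ w : InfinitePlace F, ¬ w.IsReal := by
  rintro w ⟨φ, hφ, -⟩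
  obtain ⟨x, hx⟩ := hKim (φ.comp (algebraMap K F))
  apply hx
  rw [← Complex.conj_eq_iff_im]
  exact congrArg (· (algebraMap K F x)) (ComplexEmbedding.isReal_iff.mp hφ)

omit [NumberField K] [IsScalarTower ℚ K F] in
lemma aux_absNorm_eq_absN (hquartic : Module.finrank ℚ F = 4)
    (hKim : ∀ φ : K →+* ℂ, ∃ x, (φ x).im ≠ 0)
    (σ σ' : F →+* ℂ) (hplaces : InfinitePlace.mk σ ≠ InfinitePlace.mk σ')
    (x : 𝓞 F) :
    (Ideal.absNorm (Ideal.span {x}) : ℝ) = absN σ σ' (x : F) := by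
  classical
  have h0 : InfinitePlace.nrRealPlaces F = 0 := by
    rw [Fintype.card_eq_zero_iff]
    exact ⟨fun ⟨w, hw⟩ => aux_noRealPlace hKim w hw⟩
  have h2 : Fintype.card (InfinitePlace F) = 2 := by
    have := InfinitePlace.card_add_two_mul_card_eq_rank F
    rw [h0, hquartic] at this
    rw [InfinitePlace.card_eq_nrRealPlaces_add_nrComplexPlaces, h0]
    omega
  have huniv : (Finset.univ : Finset (InfinitePlace F)) =
      {InfinitePlace.mk σ, InfinitePlace.mk σ'} := by
    symm
    apply Finset.eq_of_subset_of_card_le (Finset.subset_univ _)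
    rw [Finset.card_univ, h2, Finset.card_insert_of_notMem (by simpa using hplaces),
      Finset.card_singleton]
  have hmult : ∀ w : InfinitePlace F, w.mult = 2 := by
    intro w
    rw [InfinitePlace.mult, if_neg (aux_noRealPlace hKim w)]
  have hprod := InfinitePlace.prod_eq_abs_norm (K := F) (x : F)
  rw [huniv, Finset.prod_pair hplaces, hmult, hmult] at hprod
  rw [Ideal.absNorm_span_singleton]
  rw [Nat.cast_natAbs, Int.cast_abs]
  have h3 : |((Algebra.norm ℤ x : ℤ) : ℝ)| = ((|Algebra.norm ℚ (x:F)| : ℚ) : ℝ) := by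
    rw [← Algebra.coe_norm_int]; push_cast; ring
  rw [h3, ← hprod]
  simp [absN, InfinitePlace.apply]

/-! ### Analytic estimates -/

omit [Field K] [NumberField K] [Algebra K F] [IsScalarTower ℚ K F] in
lemma aux_interval_bound {σ σ' : F →+* ℂ} {j : ℕ} {s : ℝ} (hs : 0 < s)
    (hj2 : 2 ≤ j) (hj3 : j ≤ 3) {x : 𝓞 F} (hx : x ∈ frakB σ σ' j s) :
    0 < s ^ 2 * ‖σ (x:F)‖ ^ 2 ∧
      (s ^ 2 * ‖σ (x:F)‖ ^ 2 - 2) ^ 2 < 2 := by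
  obtain ⟨h1, h2⟩ := hx
  rw [absN] at h1
  rw [normSq2] at h2
  set a := ‖σ (x:F)‖ ^ 2 with ha
  set b := ‖σ' (x:F)‖ ^ 2 with hb
  have ha0 : 0 ≤ a := by positivity
  have hb0 : 0 ≤ b := by positivity
  have hapos : 0 < a := by
    rcases ha0.lt_or_eq with h | h
    · exact h
    · exfalso
      rw [← h, zero_mul] at h1
      have : (j:ℕ) = 0 := by exact_mod_cast h1.symm
      omega
  have hs2 : (0:ℝ) < s ^ 2 := by positivity
  have htpos : 0 < s ^ 2 * a := by positivity
  refine ⟨htpos, ?_⟩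
  have hj2' : (2:ℝ) ≤ j := by exact_mod_cast hj2
  have hj3' : (j:ℝ) ≤ 3 := by exact_mod_cast hj3
  have key : (s^2*a) * (s^2*a) - 4 * (s^2*a) + (j:ℝ) < 0 := by
    have h2' : (2 * s ^ 2 * a + 2 * (1/s) ^ 2 * b) * (s^2*a) < 8 * (s^2*a) :=
      mul_lt_mul_of_pos_right h2 htpos
    have hss : (1/s)^2 * s^2 = 1 := by field_simp
    nlinarith [h1, hss]
  nlinarith [key]

lemma aux_ratio_helper {P Q R : ℝ} (hP : 0 < P) (h1 : (P-2)^2 < 2) (h2 : (Q-2)^2 < 2)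
    (hR : 1 + Real.sqrt 2 ≤ R) (hQ : Q = P * R^2) : False := by
  have hq : Real.sqrt 2 ^ 2 = 2 := Real.sq_sqrt (by norm_num)
  have hq1 : 1 ≤ Real.sqrt 2 := by
    nlinarith [Real.sqrt_nonneg 2]
  have hPl : 2 - Real.sqrt 2 < P := by nlinarith
  have hQu : Q < 2 + Real.sqrt 2 := by nlinarith
  have hR2 : (1 + Real.sqrt 2)^2 ≤ R^2 := by nlinarith
  have h3 : P * (1 + Real.sqrt 2)^2 ≤ P * R^2 := by nlinarith
  have h4 : (2 - Real.sqrt 2) * (1 + Real.sqrt 2)^2 < P * (1 + Real.sqrt 2)^2 := by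
    have : (0:ℝ) < (1 + Real.sqrt 2)^2 := by positivity
    exact mul_lt_mul_of_pos_right hPl this
  nlinarith [h3, h4]

omit [Field K] [NumberField K] [Algebra K F] [IsScalarTower ℚ K F] in
lemma aux_unit_is_torsion {σ σ' : F →+* ℂ} {j : ℕ} {s : ℝ} (hs : 0 < s)
    (hj2 : 2 ≤ j) (hj3 : j ≤ 3)
    (ε : (𝓞 F)ˣ) (hfund : IsFundamentalUnit ε)
    (hε : 1 + Real.sqrt 2 ≤ ‖σ ((ε : 𝓞 F) : F)‖)
    {x y : 𝓞 F} (hx : x ∈ frakB σ σ' j s) (hy : y ∈ frakB σ σ' j s)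
    (u : (𝓞 F)ˣ) (hu : x * ↑u = y) : ∃ n : ℕ, 0 < n ∧ u ^ n = 1 := by
  obtain ⟨ζ, k, ⟨n, hn, hζn⟩, rfl⟩ := hfund u
  have hzabs : ‖σ ((ζ : 𝓞 F) : F)‖ = 1 := by
    have h1 : (((ζ : 𝓞 F) : F)) ^ n = 1 := by
      have := congrArg (fun w : (𝓞 F)ˣ => ((w : 𝓞 F) : F)) hζn
      simpa using this
    have h2 : ‖σ ((ζ : 𝓞 F) : F)‖ ^ n = 1 := by
      rw [← norm_pow, ← map_pow, h1]; simp
    have hnn := norm_nonneg (σ ((ζ : 𝓞 F) : F))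
    by_contra hne
    rcases lt_or_gt_of_ne hne with hlt | hgt
    · have hcon := pow_lt_one₀ hnn hlt hn.ne'
      rw [h2] at hcon; exact lt_irrefl _ hcon
    · have hcon := one_lt_pow₀ hgt hn.ne'
      rw [h2] at hcon; exact lt_irrefl _ hcon
  suffices hk : k = 0 by
    refine ⟨n, hn, ?_⟩
    rw [hk, zpow_zero, mul_one, hζn]
  set r := ‖σ ((ε : 𝓞 F) : F)‖ with hr
  have hr1 : 1 ≤ r := le_trans (by nlinarith [Real.sqrt_nonneg 2]) hε
  obtain ⟨hxP, hxI⟩ := aux_interval_bound hs hj2 hj3 hx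
  obtain ⟨hyP, hyI⟩ := aux_interval_bound hs hj2 hj3 hy
  by_contra hk
  obtain ⟨m, hm | hm⟩ := Int.eq_nat_or_neg k
  · have hm1 : 1 ≤ m := by
      rcases Nat.eq_zero_or_pos m with rfl | h
      · simp at hm; exact absurd hm hk
      · exact h
    have hval : (y : F) = (x : F) * ((ζ : 𝓞 F) : F) * (((ε : 𝓞 F) : F)) ^ m := by
      rw [← hu, hm, zpow_natCast]
      push_cast [Units.val_mul, Units.val_pow_eq_pow_val]
      ring
    have habs : ‖σ (y : F)‖ = ‖σ (x : F)‖ * r ^ m := by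
      rw [hval]; simp [map_mul, map_pow, hzabs, hr]
    have hrm : 1 + Real.sqrt 2 ≤ r ^ m := le_trans hε (by
      calc r = r ^ 1 := (pow_one r).symm
      _ ≤ r ^ m := pow_le_pow_right₀ hr1 hm1)
    refine aux_ratio_helper hxP hxI hyI hrm ?_
    rw [habs]; ring
  · have hm1 : 1 ≤ m := by
      rcases Nat.eq_zero_or_pos m with rfl | h
      · simp at hm; exact absurd hm hk
      · exact h
    have hval : (y : F) * (((ε : 𝓞 F) : F)) ^ m = (x : F) * ((ζ : 𝓞 F) : F) := by
      have h1 : y * ((ε ^ m : (𝓞 F)ˣ) : 𝓞 F) = x * (ζ : 𝓞 F) := by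
        rw [← hu, hm]
        have h2 : ((ζ : (𝓞 F)ˣ) * ε ^ (-(m:ℤ))) = ζ * (ε ^ m)⁻¹ := by
          rw [zpow_neg, zpow_natCast]
        rw [h2]
        calc x * ↑(ζ * (ε ^ m)⁻¹) * ↑(ε ^ m)
            = x * ↑ζ * (↑(ε ^ m)⁻¹ * ↑(ε ^ m)) := by push_cast [Units.val_mul]; ring
          _ = x * ↑ζ := by rw [Units.inv_mul]; ring
      have := congrArg (fun w : 𝓞 F => (w : F)) h1
      push_cast [Units.val_pow_eq_pow_val] at this ⊢
      simpa using this
    have habs : ‖σ (y : F)‖ * r ^ m = ‖σ (x : F)‖ := by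
      have := congrArg (fun z => ‖σ z‖) hval
      simpa [map_mul, map_pow, hzabs] using this
    have hrm : 1 + Real.sqrt 2 ≤ r ^ m := le_trans hε (by
      calc r = r ^ 1 := (pow_one r).symm
      _ ≤ r ^ m := pow_le_pow_right₀ hr1 hm1)
    refine aux_ratio_helper hyP hyI hxI hrm ?_
    rw [← habs]; ring

/-! ### Quotients by ideals of prime norm -/

omit [Field K] [NumberField K] [Algebra K F] [IsScalarTower ℚ K F] in
lemma aux_quot_equiv_zmod (I : Ideal (𝓞 F)) (p : ℕ) [hp : Fact p.Prime]
    (h : Ideal.absNorm I = p) : Nonempty ((𝓞 F ⧸ I) ≃+* ZMod p) := by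
  have hcard : Nat.card (𝓞 F ⧸ I) = p := by
    rw [← h, Ideal.absNorm_apply, Submodule.cardQuot_apply]
  have : Finite (𝓞 F ⧸ I) := Nat.finite_of_card_ne_zero (by rw [hcard]; exact hp.out.ne_zero)
  have : Fintype (𝓞 F ⧸ I) := Fintype.ofFinite _
  have hfcard : Fintype.card (𝓞 F ⧸ I) = p := by rw [← Nat.card_eq_fintype_card, hcard]
  have : Nontrivial (𝓞 F ⧸ I) := by
    rw [← Fintype.one_lt_card_iff_nontrivial, hfcard]; exact hp.out.one_lt
  have : CharP (𝓞 F ⧸ I) p := charP_of_card_eq_prime hfcard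
  let f := ZMod.castHom (dvd_refl p) (𝓞 F ⧸ I)
  have hbij : Function.Bijective f := by
    rw [Fintype.bijective_iff_injective_and_card]
    exact ⟨f.injective, by rw [ZMod.card, hfcard]⟩
  exact ⟨(RingEquiv.ofBijective f hbij).symm⟩

omit [Field K] [NumberField K] [Algebra K F] [IsScalarTower ℚ K F] in
lemma aux_maximal_of_absNorm_prime (I : Ideal (𝓞 F)) (p : ℕ) [hp : Fact p.Prime]
    (h : Ideal.absNorm I = p) : I.IsMaximal := by
  obtain ⟨e⟩ := aux_quot_equiv_zmod I p h
  exact Ideal.Quotient.maximal_of_isField I (e.toMulEquiv.isField (Field.toIsField (ZMod p)))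

omit [Field K] [NumberField K] [Algebra K F] [IsScalarTower ℚ K F] in
lemma aux_prime_of_absNorm_prime (I : Ideal (𝓞 F)) (p : ℕ) [hp : Fact p.Prime]
    (h : Ideal.absNorm I = p) : Prime I := by
  refine Ideal.prime_of_isPrime ?_ (aux_maximal_of_absNorm_prime I p h).isPrime
  intro hbot
  rw [hbot, Ideal.absNorm_eq_zero_iff.mpr rfl] at h
  exact hp.out.ne_zero h.symm

omit [Field K] [NumberField K] [Algebra K F] [IsScalarTower ℚ K F] in
lemma aux_count_ideals (J : Ideal (𝓞 F)) (p : ℕ) [hp : Fact p.Prime] (T : Finset (Ideal (𝓞 F)))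
    (hT : ∀ I ∈ T, Ideal.absNorm I = p ∧ I ∣ J) : p ^ T.card ∣ Ideal.absNorm J := by
  have hdvd : (∏ I ∈ T, I) ∣ J :=
    Finset.prod_primes_dvd J (fun I hI => aux_prime_of_absNorm_prime I p (hT I hI).1)
      (fun I hI => (hT I hI).2)
  have h2 := map_dvd Ideal.absNorm hdvd
  rw [map_prod] at h2
  rw [Finset.prod_congr rfl (fun I hI => (hT I hI).1), Finset.prod_const] at h2
  simpa using h2

omit [Field K] [NumberField K] [Algebra K F] [IsScalarTower ℚ K F] in
lemma aux_span_dvd_of_root (I : Ideal (𝓞 F)) (p : ℕ) [Fact p.Prime] (hI : Ideal.absNorm I = p)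
    (c : 𝓞 F) (m : ℕ) (hc : c ^ m = 1) (hzmod : ∀ t : ZMod p, t ^ m = 1 → t = 1) :
    I ∣ Ideal.span {c - 1} := by
  obtain ⟨e⟩ := aux_quot_equiv_zmod I p hI
  have h1 : (e (Ideal.Quotient.mk I c)) ^ m = 1 := by
    rw [← map_pow, ← map_pow, hc, map_one, map_one]
  have h3 : Ideal.Quotient.mk I c = Ideal.Quotient.mk I 1 := by
    apply e.injective
    rw [hzmod _ h1, map_one, map_one]
  have h4 : c - 1 ∈ I := by
    have := Ideal.Quotient.eq.mp h3
    simpa using this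
  rw [Ideal.dvd_iff_le, Ideal.span_le]
  simpa using h4

omit [Field K] [NumberField K] [Algebra K F] [IsScalarTower ℚ K F] in
lemma aux_no_sqrt_neg_one (I : Ideal (𝓞 F)) (hI : Ideal.absNorm I = 3)
    (c : 𝓞 F) (hc : c ^ 2 = -1) : False := by
  haveI : Fact (Nat.Prime 3) := ⟨by norm_num⟩
  obtain ⟨e⟩ := aux_quot_equiv_zmod I 3 hI
  have h1 : (e (Ideal.Quotient.mk I c)) ^ 2 = -1 := by
    rw [← map_pow, ← map_pow, hc]
    simp
  exact aux_zmod3_sq _ h1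

/-! ### Torsion units -/

omit [Field K] [NumberField K] [Algebra K F] [IsScalarTower ℚ K F] in
lemma aux_exists_unit_orderOf (d : ℕ) (hd : d ∣ Nat.card (Units.torsion F)) :
    ∃ c : 𝓞 F, orderOf c = d := by
  obtain ⟨g, hg⟩ := IsCyclic.exists_generator (α := Units.torsion F)
  have hw0 : 0 < Nat.card (Units.torsion F) := Nat.card_pos
  have hord : orderOf g = Nat.card (Units.torsion F) :=
    orderOf_eq_card_of_forall_mem_zpowers hg
  set w := Nat.card (Units.torsion F) with hw
  refine ⟨(((g ^ (w / d) : Units.torsion F) : (𝓞 F)ˣ) : 𝓞 F), ?_⟩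
  have h1 : orderOf (g ^ (w / d)) = d := by
    rw [orderOf_pow, hord, Nat.gcd_eq_right (Nat.div_dvd_of_dvd hd),
      Nat.div_div_self hd hw0.ne']
  have e1 := orderOf_injective ((Units.coeHom (𝓞 F)).comp (Units.torsion F).subtype)
    (Units.val_injective.comp Subtype.coe_injective) (g ^ (w / d))
  rw [h1] at e1
  exact e1

omit [Field K] [NumberField K] [Algebra K F] [IsScalarTower ℚ K F] in
lemma aux_totient_torsion_le (hquartic : Module.finrank ℚ F = 4) :
    Nat.totient (Nat.card (Units.torsion F)) ≤ 4 := by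
  set w := Nat.card (Units.torsion F) with hw
  have hw0 : 0 < w := Nat.card_pos
  obtain ⟨c, hc⟩ := aux_exists_unit_orderOf (F := F) w dvd_rfl
  have hordF : orderOf ((c : F)) = w := by
    rw [← hc]
    exact (orderOf_injective ((algebraMap (𝓞 F) F).toMonoidHom)
      (IsFractionRing.injective _ _) c).symm ▸ rfl
  have hroot : IsPrimitiveRoot ((c:F)) w := by
    rw [← hordF]; exact IsPrimitiveRoot.orderOf _
  have hcyc := Polynomial.cyclotomic_eq_minpoly_rat hroot hw0
  have h1 : Nat.totient w = (minpoly ℚ ((c:F))).natDegree := by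
    rw [← hcyc, Polynomial.natDegree_cyclotomic]
  rw [h1, ← hquartic]
  exact minpoly.natDegree_le _

/-! ### Norm of `span {c - 1}` for `c² = -1` -/

omit [NumberField K] [IsScalarTower ℚ K F] in
lemma aux_absNorm_sq_neg_one (hquartic : Module.finrank ℚ F = 4)
    (hKim : ∀ φ : K →+* ℂ, ∃ x, (φ x).im ≠ 0)
    (σ σ' : F →+* ℂ) (hplaces : InfinitePlace.mk σ ≠ InfinitePlace.mk σ')
    (c : 𝓞 F) (hc : c ^ 2 = -1) :
    Ideal.absNorm (Ideal.span {c - 1}) = 4 := by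
  have key : ∀ φ : F →+* ℂ, ‖φ (((c - 1 : 𝓞 F) : F))‖ ^ 2 = 2 := by
    intro φ
    have hcF : ((c : F)) ^ 2 = -1 := by
      have := congrArg (fun w : 𝓞 F => (w : F)) hc
      push_cast at this
      simpa using this
    have hz : (φ ((c : F))) ^ 2 = -1 := by
      rw [← map_pow, hcF, map_neg, map_one]
    have hfact : (φ ((c:F)) - Complex.I) * (φ ((c:F)) + Complex.I) = 0 := by
      linear_combination hz - Complex.I_sq
    have hsub : ((c - 1 : 𝓞 F) : F) = (c : F) - 1 := by push_cast; ring
    rcases mul_eq_zero.mp hfact with h | h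
    · have hI : φ ((c:F)) = Complex.I := sub_eq_zero.mp h
      rw [hsub, map_sub, map_one, hI, Complex.sq_norm, Complex.normSq_apply]
      simp
      norm_num
    · have hI : φ ((c:F)) = -Complex.I := eq_neg_of_add_eq_zero_left h
      rw [hsub, map_sub, map_one, hI, Complex.sq_norm, Complex.normSq_apply]
      simp
      norm_num
  have hb := aux_absNorm_eq_absN hquartic hKim σ σ' hplaces (c - 1)
  rw [absN, key σ, key σ'] at hb
  have : ((Ideal.absNorm (Ideal.span {c - 1}) : ℕ) : ℝ) = ((4 : ℕ) : ℝ) := by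
    rw [hb]; norm_num
  exact_mod_cast this

end Main

theorem stmt5
    (F K : Type*) [Field F] [NumberField F] [Field K] [NumberField K]
    [Algebra K F] [IsScalarTower ℚ K F]
    (hquartic : Module.finrank ℚ F = 4)
    (hquad : Module.finrank K F = 2)
    (hKim : ∀ φ : K →+* ℂ, ∃ x, (φ x).im ≠ 0)
    (σ σ' : F →+* ℂ)
    (hplaces : InfinitePlace.mk σ ≠ InfinitePlace.mk σ')
    (ε : (𝓞 F)ˣ) (hfund : IsFundamentalUnit ε)
    (hε : 1 + Real.sqrt 2 ≤ ‖σ ((ε : 𝓞 F) : F)‖) :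
    ∀ s ∈ Set.Icc (0.8722 : ℝ) (1 / 0.8722), ∀ j ∈ ({2, 3} : Set ℕ),
      (frakB σ σ' j s).Finite ∧ (frakB σ σ' j s).ncard ≤ 30 := by
  classical
  intro s hs j hj
  have hs0 : 0 < s := lt_of_lt_of_le (by norm_num) hs.1
  have hj23 : j = 2 ∨ j = 3 := by simpa using hj
  have hj2 : 2 ≤ j := by rcases hj23 with rfl | rfl <;> norm_num
  have hj3 : j ≤ 3 := by rcases hj23 with rfl | rfl <;> norm_num
  haveI hjfact : Fact (Nat.Prime j) := by
    rcases hj23 with rfl | rfl <;> exact ⟨by norm_num⟩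
  set S := frakB σ σ' j s with hS
  have hbridge := aux_absNorm_eq_absN (K := K) hquartic hKim σ σ' hplaces
  -- norm of span of elements of S
  have hnorm : ∀ x ∈ S, Ideal.absNorm (Ideal.span {x}) = j := by
    intro x hx
    have h := hbridge x
    rw [hx.1] at h
    exact_mod_cast h
  have habsnat : ∀ q : ℕ, Ideal.absNorm (Ideal.span {(q : 𝓞 F)}) = q ^ 4 := by
    intro q
    have h := hbridge (q : 𝓞 F)
    have hcoe : (((q : 𝓞 F) : F)) = (q : F) := by push_cast; ring
    simp only [absN, hcoe, map_natCast, Complex.norm_natCast] at h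
    have : ((Ideal.absNorm (Ideal.span {(q : 𝓞 F)}) : ℕ) : ℝ) = ((q ^ 4 : ℕ) : ℝ) := by
      rw [h]; push_cast; ring
    exact_mod_cast this
  -- the set of ideals generated by elements of S
  set T : Set (Ideal (𝓞 F)) := (fun x : 𝓞 F => Ideal.span {x}) '' S with hT
  have hTnorm : ∀ I ∈ T, Ideal.absNorm I = j := by
    rintro I ⟨x, hx, rfl⟩
    exact hnorm x hx
  have hTfin : T.Finite :=
    (Ideal.finite_setOf_absNorm_eq j).subset (fun I hI => hTnorm I hI)
  -- choice of representatives
  have hrep : ∀ I ∈ T, ∃ x, x ∈ S ∧ Ideal.span {x} = I := fun I hI => hI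
  choose! rep hrepS hrepspan using hrep
  -- units
  have hassoc : ∀ x ∈ S, ∃ u : (𝓞 F)ˣ, rep (Ideal.span {x}) * ↑u = x := by
    intro x hx
    have hmem : Ideal.span {x} ∈ T := ⟨x, hx, rfl⟩
    have h := Ideal.span_singleton_eq_span_singleton.mp (hrepspan _ hmem)
    obtain ⟨u, hu⟩ := h
    exact ⟨u, hu⟩
  choose! uu huu using hassoc
  have hutor : ∀ x (hx : x ∈ S), uu x ∈ Units.torsion F := by
    intro x hx
    have hmem : Ideal.span {x} ∈ T := ⟨x, hx, rfl⟩
    have h := aux_unit_is_torsion hs0 hj2 hj3 ε hfund hε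
      (hrepS _ hmem) hx (uu x) (huu x hx)
    obtain ⟨n, hn, h1⟩ := h
    exact isOfFinOrder_iff_pow_eq_one.mpr ⟨n, hn, h1⟩
  -- injection into T × torsion
  haveI hTfinE : Finite T := hTfin.to_subtype
  let Φ : S → T × (Units.torsion F) := fun x =>
    ⟨⟨Ideal.span {(x : 𝓞 F)}, ⟨x, x.2, rfl⟩⟩, ⟨uu x, hutor x x.2⟩⟩
  have hΦinj : Function.Injective Φ := by
    rintro ⟨x, hx⟩ ⟨y, hy⟩ hxy
    have hspan : Ideal.span {x} = Ideal.span {y} :=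
      congrArg (fun p : ↑T × (Units.torsion F) => (p.1 : Ideal (𝓞 F))) hxy
    have huueq : uu x = uu y :=
      congrArg (fun p : ↑T × (Units.torsion F) => (p.2 : (𝓞 F)ˣ)) hxy
    have ex := huu x hx
    have ey := huu y hy
    apply Subtype.ext
    show x = y
    rw [← ex, ← ey, hspan, huueq]
  have hSfin : (frakB σ σ' j s).Finite := by
    rw [← Set.finite_coe_iff]
    exact Finite.of_injective Φ hΦinj
  refine ⟨hSfin, ?_⟩
  -- counting
  set w := Nat.card (Units.torsion F) with hwdef
  have hcount : S.ncard ≤ T.ncard * w := by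
    have h1 : Nat.card S ≤ Nat.card (T × (Units.torsion F)) :=
      Nat.card_le_card_of_injective Φ hΦinj
    rw [Nat.card_prod] at h1
    rw [← Nat.card_coe_set_eq, ← Nat.card_coe_set_eq]
    exact h1
  -- generic bound on T
  have hTcard : ∀ J : Ideal (𝓞 F), (∀ I ∈ T, I ∣ J) → j ^ T.ncard ∣ Ideal.absNorm J := by
    intro J hJ
    have h := aux_count_ideals J j hTfin.toFinset
      (fun I hI => ⟨hTnorm I (hTfin.mem_toFinset.mp hI), hJ I (hTfin.mem_toFinset.mp hI)⟩)
    rwa [Set.ncard_eq_toFinset_card T hTfin]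
  have hTdvdj : ∀ I ∈ T, I ∣ Ideal.span {(j : 𝓞 F)} := by
    intro I hI
    rw [Ideal.dvd_iff_le, Ideal.span_le]
    have := Ideal.absNorm_mem I
    rw [hTnorm I hI] at this
    simpa using this
  have hgen4 : T.ncard ≤ 4 := by
    have h := hTcard _ hTdvdj
    rw [habsnat j] at h
    have hle := Nat.le_of_dvd (by positivity) h
    exact (Nat.pow_le_pow_iff_right hjfact.out.one_lt).mp hle
  -- torsion order
  have hw0 : 0 < w := Nat.card_pos
  have hw4 : Nat.totient w ≤ 4 := aux_totient_torsion_le hquartic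
  have hw120 : w ∣ 120 := aux_dvd120 hw0 hw4
  have hwcases := aux_numcase w (by have := Nat.le_of_dvd (by norm_num) hw120; omega) hw120 hw4
  -- helper : T is empty whenever each of its members yields False
  have hTempty : (∀ I ∈ T, False) → T.ncard = 0 := by
    intro h
    rw [Set.ncard_eq_zero hTfin]
    exact Set.eq_empty_iff_forall_notMem.mpr (fun I hI => h I hI)
  -- helper : from (c-1) ∣ (q : 𝓞 F) and j ∤ q^4 get contradiction
  have hdvdcontra : ∀ (c : 𝓞 F) (m q : ℕ), c ^ m = 1 →
      (∀ t : ZMod j, t ^ m = 1 → t = 1) →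
      ((c - 1) ∣ (q : 𝓞 F)) → ¬ (j ∣ q ^ 4) → (∀ I ∈ T, False) := by
    intro c m q hcm hzmod hdvd hnotdvd I hI
    have hIdvd : I ∣ Ideal.span {c - 1} :=
      aux_span_dvd_of_root I j (hTnorm I hI) c m hcm hzmod
    have h2 : Ideal.span {c - 1} ∣ Ideal.span {(q : 𝓞 F)} :=
      Ideal.dvd_iff_le.mpr (Ideal.span_singleton_le_span_singleton.mpr hdvd)
    have h3 := map_dvd Ideal.absNorm (dvd_trans hIdvd h2)
    rw [hTnorm I hI, habsnat q] at h3
    exact hnotdvd h3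
  rcases hwcases with hw6 | hw8 | hw10 | hw12
  · -- w ≤ 6 : generic bound 4 * 6 = 24
    calc S.ncard ≤ T.ncard * w := hcount
      _ ≤ 4 * 6 := Nat.mul_le_mul hgen4 hw6
      _ ≤ 30 := by norm_num
  · -- w = 8 : F contains i
    obtain ⟨c, hc4⟩ := aux_exists_unit_orderOf (F := F) 4 (by rw [← hwdef, hw8]; norm_num)
    have hcpow : c ^ 4 = 1 := by rw [← hc4]; exact pow_orderOf_eq_one c
    have hc2ne : c ^ 2 ≠ 1 := by
      intro h
      have := orderOf_dvd_of_pow_eq_one h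
      rw [hc4] at this
      norm_num at this
    have hc2 : c ^ 2 = -1 := by
      have hfact : (c ^ 2 - 1) * (c ^ 2 + 1) = 0 := by linear_combination hcpow
      rcases mul_eq_zero.mp hfact with h | h
      · exact absurd (sub_eq_zero.mp h) hc2ne
      · linear_combination h
    rcases hj23 with rfl | rfl
    · -- j = 2 : at most 2 ideals
      have hT2 : T.ncard ≤ 2 := by
        have hTd : ∀ I ∈ T, I ∣ Ideal.span {c - 1} := by
          intro I hI
          exact aux_span_dvd_of_root I 2 (hTnorm I hI) c 4 hcpow aux_zmod2_pow4
        have h := hTcard _ hTd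
        rw [aux_absNorm_sq_neg_one (K := K) hquartic hKim σ σ' hplaces c hc2] at h
        have hle := Nat.le_of_dvd (by norm_num) h
        have : (2:ℕ) ^ T.ncard ≤ 2 ^ 2 := by norm_num at hle ⊢; omega
        exact (Nat.pow_le_pow_iff_right (by norm_num)).mp this
      calc S.ncard ≤ T.ncard * w := hcount
        _ ≤ 2 * 8 := by rw [hw8]; exact Nat.mul_le_mul_right _ hT2
        _ ≤ 30 := by norm_num
    · -- j = 3 : no ideals at all
      have hTe : T.ncard = 0 := hTempty (fun I hI =>
        aux_no_sqrt_neg_one I (hTnorm I hI) c hc2)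
      calc S.ncard ≤ T.ncard * w := hcount
        _ = 0 := by rw [hTe, zero_mul]
        _ ≤ 30 := by norm_num
  · -- w = 10 : F contains ζ₅, no ideals
    obtain ⟨c, hc5⟩ := aux_exists_unit_orderOf (F := F) 5 (by rw [← hwdef, hw10]; norm_num)
    have hcpow : c ^ 5 = 1 := by rw [← hc5]; exact pow_orderOf_eq_one c
    have hcne : c ≠ 1 := by
      intro h
      rw [h, orderOf_one] at hc5
      norm_num at hc5
    have hsum : c ^ 4 + c ^ 3 + c ^ 2 + c + 1 = 0 := by
      have hfact : (c - 1) * (c ^ 4 + c ^ 3 + c ^ 2 + c + 1) = 0 := by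
        linear_combination hcpow
      rcases mul_eq_zero.mp hfact with h | h
      · exact absurd (sub_eq_zero.mp h) hcne
      · exact h
    have hdvd : (c - 1) ∣ ((5 : ℕ) : 𝓞 F) := by
      refine ⟨-(c ^ 3 + 2 * c ^ 2 + 3 * c + 4), ?_⟩
      push_cast
      linear_combination hsum
    have hTe : T.ncard = 0 := by
      apply hTempty
      rcases hj23 with rfl | rfl
      · exact hdvdcontra c 5 5 hcpow aux_zmod2_pow5 hdvd (by norm_num)
      · exact hdvdcontra c 5 5 hcpow aux_zmod3_pow5 hdvd (by norm_num)
    calc S.ncard ≤ T.ncard * w := hcount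
      _ = 0 := by rw [hTe, zero_mul]
      _ ≤ 30 := by norm_num
  · -- w = 12
    rcases hj23 with rfl | rfl
    · -- j = 2 : use ζ₃
      obtain ⟨c, hc3⟩ := aux_exists_unit_orderOf (F := F) 3 (by rw [← hwdef, hw12]; norm_num)
      have hcpow : c ^ 3 = 1 := by rw [← hc3]; exact pow_orderOf_eq_one c
      have hcne : c ≠ 1 := by
        intro h
        rw [h, orderOf_one] at hc3
        norm_num at hc3
      have hsum : c ^ 2 + c + 1 = 0 := by
        have hfact : (c - 1) * (c ^ 2 + c + 1) = 0 := by linear_combination hcpow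
        rcases mul_eq_zero.mp hfact with h | h
        · exact absurd (sub_eq_zero.mp h) hcne
        · exact h
      have hdvd : (c - 1) ∣ ((3 : ℕ) : 𝓞 F) := by
        refine ⟨-(c + 2), ?_⟩
        push_cast
        linear_combination hsum
      have hTe : T.ncard = 0 := by
        apply hTempty
        exact hdvdcontra c 3 3 hcpow aux_zmod2_pow3 hdvd (by norm_num)
      calc S.ncard ≤ T.ncard * w := hcount
        _ = 0 := by rw [hTe, zero_mul]
        _ ≤ 30 := by norm_num
    · -- j = 3 : use i
      obtain ⟨c, hc4⟩ := aux_exists_unit_orderOf (F := F) 4 (by rw [← hwdef, hw12]; norm_num)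
      have hcpow : c ^ 4 = 1 := by rw [← hc4]; exact pow_orderOf_eq_one c
      have hc2ne : c ^ 2 ≠ 1 := by
        intro h
        have := orderOf_dvd_of_pow_eq_one h
        rw [hc4] at this
        norm_num at this
      have hc2 : c ^ 2 = -1 := by
        have hfact : (c ^ 2 - 1) * (c ^ 2 + 1) = 0 := by linear_combination hcpow
        rcases mul_eq_zero.mp hfact with h | h
        · exact absurd (sub_eq_zero.mp h) hc2ne
        · linear_combination h
      have hTe : T.ncard = 0 := hTempty (fun I hI =>
        aux_no_sqrt_neg_one I (hTnorm I hI) c hc2)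
      calc S.ncard ≤ T.ncard * w := hcount
        _ = 0 := by rw [hTe, zero_mul]
        _ ≤ 30 := by norm_num
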